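/- Every matroid whose restriction to the union of any two bases is strongly base orderable is SIBO; in particular, every strongly base orderable (SBO) matroid is subsequence-interchangeably base orderable (SIBO). -/

import Mathlib

/-- `M` is strongly base orderable: for any two bases `A, B` there is a bijection
`σ : A → B` with `(B \ σ(X)) ∪ X` a base for every `X ⊆ A`. -/
def IsSBO {α : Type*} (M : Matroid α) : Prop :=
  ∀ A B : Set α, M.IsBase A → M.IsBase B →
    ∃ σ : α → α, Set.BijOn σ A B ∧ ∀ X ⊆ A, M.IsBase ((B \ σ '' X) ∪ X)

/-- `M` is subsequence-interchangeably base orderable (SIBO): every pair of bases `A, B`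
admits orderings `a, b` such that `(B \ {b_i, …, b_j}) ∪ {a_i, …, a_j}` is a base for all
`i ≤ j`. -/
def IsSIBO {α : Type*} (M : Matroid α) : Prop :=
  ∀ A B : Set α, M.IsBase A → M.IsBase B →
    ∃ (r : ℕ) (a b : Fin r → α),
      Function.Injective a ∧ A = Set.range a ∧
      Function.Injective b ∧ B = Set.range b ∧
      ∀ i j : Fin r, i ≤ j →
        M.IsBase ((B \ (b '' Set.Icc i j)) ∪ (a '' Set.Icc i j))

theorem aux_18 {α : Type*} :
    ∀ M : Matroid α, M.E.Finite →
      (∀ A B : Set α, M.IsBase A → M.IsBase B → IsSBO (M.restrict (A ∪ B))) → IsSIBO M := by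
  intro M hE hres A B hA hB
  have hAE : A ⊆ M.E := hA.subset_ground
  have hBE : B ⊆ M.E := hB.subset_ground
  have hABE : A ∪ B ⊆ M.E := Set.union_subset hAE hBE
  -- A and B are bases of the restriction
  have hA' : (M.restrict (A ∪ B)).IsBase A :=
    (Matroid.isBase_restrict_iff hABE).2 (hA.isBasis_of_subset hABE Set.subset_union_left)
  have hB' : (M.restrict (A ∪ B)).IsBase B :=
    (Matroid.isBase_restrict_iff hABE).2 (hB.isBasis_of_subset hABE Set.subset_union_right)
  obtain ⟨σ, hσbij, hσ⟩ := hres A B hA hB A B hA' hB'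
  -- enumerate A
  have hAfin : A.Finite := hE.subset hAE
  haveI : Fintype A := hAfin.fintype
  obtain ⟨r, e⟩ : ∃ r, Nonempty (A ≃ Fin r) := ⟨Fintype.card A, ⟨Fintype.equivFin A⟩⟩
  obtain ⟨e⟩ := e
  refine ⟨r, fun i => (e.symm i : α), fun i => σ (e.symm i : α), ?_, ?_, ?_, ?_, ?_⟩
  · exact fun i j h => e.symm.injective (Subtype.coe_injective h)
  · ext x
    constructor
    · intro hx; exact ⟨e ⟨x, hx⟩, by simp⟩
    · rintro ⟨i, rfl⟩; exact (e.symm i).2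
  · intro i j h
    exact e.symm.injective (Subtype.coe_injective (hσbij.injOn (e.symm i).2 (e.symm j).2 h))
  · ext x
    constructor
    · intro hx
      obtain ⟨y, hyA, rfl⟩ := hσbij.surjOn hx
      exact ⟨e ⟨y, hyA⟩, by simp⟩
    · rintro ⟨i, rfl⟩; exact hσbij.mapsTo (e.symm i).2
  · intro i j _
    set X := (fun i => (e.symm i : α)) '' Set.Icc i j with hX
    have hXA : X ⊆ A := by rintro x ⟨k, -, rfl⟩; exact (e.symm k).2
    have himg : (fun k => σ (e.symm k : α)) '' Set.Icc i j = σ '' X := by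
      rw [hX, Set.image_image]
    rw [himg]
    have hbase := hσ X hXA
    rw [Matroid.isBase_restrict_iff hABE] at hbase
    exact hbase.isBase_of_isBase_subset hA Set.subset_union_left

/-- Every (finite) matroid whose restriction to the union of any two bases is SBO is
SIBO; in particular, every SBO matroid is SIBO. -/
theorem stmt_18 {α : Type*} :
    (∀ M : Matroid α, M.E.Finite →
      (∀ A B : Set α, M.IsBase A → M.IsBase B → IsSBO (M.restrict (A ∪ B))) → IsSIBO M) ∧
    (∀ M : Matroid α, M.E.Finite → IsSBO M → IsSIBO M) := by
  constructor
  · exact aux_18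
  · intro M hE hSBO
    refine aux_18 M hE ?_
    intro A B hA hB A' B' hA' hB'
    have hABE : A ∪ B ⊆ M.E := Set.union_subset hA.subset_ground hB.subset_ground
    rw [Matroid.isBase_restrict_iff hABE] at hA' hB'
    have hA'' : M.IsBase A' := hA'.isBase_of_isBase_subset hA Set.subset_union_left
    have hB'' : M.IsBase B' := hB'.isBase_of_isBase_subset hA Set.subset_union_left
    obtain ⟨σ, hbij, hσ⟩ := hSBO A' B' hA'' hB''
    refine ⟨σ, hbij, fun X hX => ?_⟩
    rw [Matroid.isBase_restrict_iff hABE]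
    have := hσ X hX
    exact this.isBasis_of_subset hABE
      (Set.union_subset ((Set.diff_subset).trans hB'.subset) ((hX.trans hA'.subset)))
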